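/- (Policy contrast inequality.) Let R̂ be the PCA adversarial reward function, and suppose that every good policy π₂ ∈ Π₂ satisfies dist(π₂(s), π₁(s)) > d at every state s ∈ S. If the corruption parameters satisfy Δ₁ + Δ₂ > M + (1−γ)·δ for some δ ≥ 0, then the bad policy strictly outperforms every good policy under the adversarial reward with margin δ: J_{R̂}(π₁) > J_{R̂}(π₂) + δ for every π₂ ∈ Π₂. -/

import Mathlib

/-- The trajectory of a deterministic policy `π` in a deterministic MDP with
transition function `P`, starting from `s0`. -/
def traj {S A : Type*} (P : S → A → S) (π : S → A) (s0 : S) : ℕ → S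
  | 0 => s0
  | t + 1 => P (traj P π s0 t) (π (traj P π s0 t))

/-- The performance `J_{R}(π)` of a deterministic policy `π`: the discounted
cumulative reward along its trajectory. -/
noncomputable def perf {S A : Type*} (P : S → A → S) (s0 : S) (γ : ℝ)
    (R : S → A → ℝ) (π : S → A) : ℝ :=
  ∑' t : ℕ, γ ^ t * R (traj P π s0 t) (π (traj P π s0 t))

open Classical in
/-- The PCA (policy contrast attack) adversarial reward function, built from the
true reward `R`, the bad policy `π₁`, the good policy set `Pi₂`, the distance
threshold `d`, and the corruption parameters `Δ₁`, `Δ₂`. -/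
noncomputable def pcaReward {S A : Type*} [MetricSpace A] (R : S → A → ℝ)
    (π₁ : S → A) (Pi₂ : Finset (S → A)) (d Δ₁ Δ₂ : ℝ) (s : S) (a : A) : ℝ :=
  if dist a (π₁ s) ≤ d then R s a + Δ₁ * (1 - dist a (π₁ s) / d)
  else if ∃ π₂ ∈ Pi₂, dist a (π₂ s) ≤ d then -Δ₂
  else R s a

/-- policy contrast inequality: if every good policy keeps distance
more than `d` from the bad policy's action at every state and the corruption
parameters satisfy `Δ₁ + Δ₂ > M + (1 - γ) * δ`, then the bad policy strictly
outperforms every good policy under the adversarial reward with margin `δ`. -/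
theorem stmt_16 {S A : Type*} [MetricSpace A] (P : S → A → S) (s0 : S)
    (R : S → A → ℝ) (M : ℝ) (hR : ∀ s a, |R s a| ≤ M)
    (γ : ℝ) (hγ0 : 0 ≤ γ) (hγ1 : γ < 1)
    (π₁ : S → A) (Pi₂ : Finset (S → A)) (d Δ₁ Δ₂ : ℝ)
    (hd : 0 < d) (hΔ₁ : 0 ≤ Δ₁) (hΔ₂ : 0 ≤ Δ₂)
    (hfar : ∀ π₂ ∈ Pi₂, ∀ s : S, d < dist (π₂ s) (π₁ s))
    (δ : ℝ) (hδ : 0 ≤ δ) (hbudget : M + (1 - γ) * δ < Δ₁ + Δ₂) :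
    ∀ π₂ ∈ Pi₂, perf P s0 γ (pcaReward R π₁ Pi₂ d Δ₁ Δ₂) π₂ + δ <
      perf P s0 γ (pcaReward R π₁ Pi₂ d Δ₁ Δ₂) π₁ := by
  intro π₂ hπ₂
  have h1γ : (0:ℝ) < 1 - γ := by linarith
  -- reward along π₁'s trajectory
  have hr1 : ∀ s : S, pcaReward R π₁ Pi₂ d Δ₁ Δ₂ s (π₁ s)
      = R s (π₁ s) + Δ₁ := by
    intro s
    simp [pcaReward, dist_self, hd.le, le_of_lt hd, hd.ne']
  -- reward along π₂'s trajectory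
  have hr2 : ∀ s : S, pcaReward R π₁ Pi₂ d Δ₁ Δ₂ s (π₂ s) = -Δ₂ := by
    intro s
    have h1 : ¬ dist (π₂ s) (π₁ s) ≤ d := not_le.2 (hfar π₂ hπ₂ s)
    have h2 : ∃ π ∈ Pi₂, dist (π₂ s) (π s) ≤ d := ⟨π₂, hπ₂, by simp [hd.le]⟩
    simp [pcaReward, h1, h2]
  have hgeo : Summable (fun t : ℕ => γ ^ t) :=
    summable_geometric_of_lt_one hγ0 hγ1
  have htsum : ∑' t : ℕ, γ ^ t = (1 - γ)⁻¹ := tsum_geometric_of_lt_one hγ0 hγ1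
  -- perf of π₂ is a constant geometric series
  have hperf2 : perf P s0 γ (pcaReward R π₁ Pi₂ d Δ₁ Δ₂) π₂ = -Δ₂ * (1 - γ)⁻¹ := by
    unfold perf
    simp only [hr2]
    rw [tsum_mul_right, htsum]
    ring
  -- lower bound perf of π₁
  have hsum1 : Summable (fun t : ℕ =>
      γ ^ t * (R (traj P π₁ s0 t) (π₁ (traj P π₁ s0 t)) + Δ₁)) := by
    apply Summable.of_norm_bounded (g := fun t => γ ^ t * (M + Δ₁)) (hgeo.mul_right _)
    intro t
    have h0 : (0:ℝ) ≤ γ ^ t := pow_nonneg hγ0 t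
    have hb := hR (traj P π₁ s0 t) (π₁ (traj P π₁ s0 t))
    rw [norm_mul, Real.norm_eq_abs, Real.norm_eq_abs, abs_of_nonneg h0]
    have : |R (traj P π₁ s0 t) (π₁ (traj P π₁ s0 t)) + Δ₁| ≤ M + Δ₁ := by
      rw [abs_le] at hb ⊢
      constructor <;> nlinarith [hb.1, hb.2]
    exact mul_le_mul_of_nonneg_left this h0
  have hlow : (Δ₁ - M) * (1 - γ)⁻¹ ≤ perf P s0 γ (pcaReward R π₁ Pi₂ d Δ₁ Δ₂) π₁ := by
    unfold perf
    simp only [hr1]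
    have := Summable.tsum_le_tsum (f := fun t : ℕ => γ ^ t * (Δ₁ - M))
      (g := fun t : ℕ => γ ^ t * (R (traj P π₁ s0 t) (π₁ (traj P π₁ s0 t)) + Δ₁))
      (fun t => by
        have h0 : (0:ℝ) ≤ γ ^ t := pow_nonneg hγ0 t
        have hb := (abs_le.1 (hR (traj P π₁ s0 t) (π₁ (traj P π₁ s0 t)))).1
        exact mul_le_mul_of_nonneg_left (by linarith) h0) (hgeo.mul_right _) hsum1
    rwa [tsum_mul_right, htsum, mul_comm] at this
  rw [hperf2]
  have key : -Δ₂ * (1 - γ)⁻¹ + δ < (Δ₁ - M) * (1 - γ)⁻¹ := by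
    rw [← sub_pos]
    have : (Δ₁ - M) * (1 - γ)⁻¹ - (-Δ₂ * (1 - γ)⁻¹ + δ)
        = (Δ₁ + Δ₂ - M - (1 - γ) * δ) * (1 - γ)⁻¹ := by
      field_simp
      ring
    rw [this]
    exact mul_pos (by linarith) (inv_pos.2 h1γ)
  linarith
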